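/- Let N = F ⊕ ℤ^d with F a finite abelian group, π : N → ℤ^d the projection, and 𝒜 = (a_1,…,a_n) a list of elements of N such that the images π(a_1),…,π(a_n) generate ℤ^d as a group and the cone C = ℝ_{≥0}π(a_1) + ⋯ + ℝ_{≥0}π(a_n) ⊆ ℝ^d satisfies C ∩ (−C) = {0}. Let K := {u ∈ N : π(u) ∈ C}. Then K is a submonoid of N containing the submonoid ℕ𝒜 generated by a_1,…,a_n, and K is finitely generated as an ℕ𝒜-module: there exist finitely many k_1,…,k_m ∈ K with K = ⋃_{i=1}^m (ℕ𝒜 + k_i). -/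

import Mathlib

/-- Let `N = F ⊕ ℤ^d` with `F` finite abelian, `π` the projection,
and `𝒜 = (a₁,…,aₙ)` elements of `N` whose images generate `ℤ^d` and span a pointed
cone `C`. Then `K = {u ∈ N : π(u) ∈ C}` is a submonoid of `N` containing the
submonoid `ℕ𝒜` generated by the `aⱼ`, and `K` is a finite union of translates
`ℕ𝒜 + kᵢ`. -/
theorem stmt_16 {F : Type*} [AddCommGroup F] [Fintype F] {d n : ℕ}
    (a : Fin n → F × (Fin d → ℤ))
    (hspan : AddSubgroup.closure (Set.range fun j => (a j).2) = ⊤)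
    (hpointed : ∀ c c' : Fin n → ℝ, (∀ j, 0 ≤ c j) → (∀ j, 0 ≤ c' j) →
      (∑ j, c j • (fun i => ((a j).2 i : ℝ))) +
        (∑ j, c' j • (fun i => ((a j).2 i : ℝ))) = 0 →
      (∑ j, c j • (fun i => ((a j).2 i : ℝ))) = 0)
    (K : Set (F × (Fin d → ℤ)))
    (hK : K = {u : F × (Fin d → ℤ) | ∃ c : Fin n → ℝ, (∀ j, 0 ≤ c j) ∧
      (fun i => (u.2 i : ℝ)) = ∑ j, c j • (fun i => ((a j).2 i : ℝ))}) :
    (0 ∈ K ∧ ∀ u ∈ K, ∀ v ∈ K, u + v ∈ K) ∧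
    (↑(AddSubmonoid.closure (Set.range a)) ⊆ K) ∧
    ∃ (m : ℕ) (g : Fin m → F × (Fin d → ℤ)), (∀ i, g i ∈ K) ∧
      K = ⋃ i, (fun s => s + g i) '' ↑(AddSubmonoid.closure (Set.range a)) := by
  subst hK
  set Kset := {u : F × (Fin d → ℤ) | ∃ c : Fin n → ℝ, (∀ j, 0 ≤ c j) ∧
      (fun i => (u.2 i : ℝ)) = ∑ j, c j • (fun i => ((a j).2 i : ℝ))} with hKset
  have hzero : (0 : F × (Fin d → ℤ)) ∈ Kset := by
    refine ⟨0, fun j => le_refl 0, ?_⟩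
    funext i
    simp
  have hadd : ∀ u ∈ Kset, ∀ v ∈ Kset, u + v ∈ Kset := by
    rintro u ⟨c, hc0, hc⟩ v ⟨c', hc0', hc'⟩
    refine ⟨c + c', fun j => add_nonneg (hc0 j) (hc0' j), ?_⟩
    funext i
    have h1 := congrFun hc i
    have h2 := congrFun hc' i
    simp only [Finset.sum_apply, Pi.smul_apply, smul_eq_mul, Pi.add_apply] at h1 h2 ⊢
    have h3 : (u + v).2 i = u.2 i + v.2 i := rfl
    rw [h3]
    push_cast
    rw [h1, h2, ← Finset.sum_add_distrib]
    exact Finset.sum_congr rfl fun j _ => by ring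
  have hbase : ∀ j, a j ∈ Kset := by
    intro j
    refine ⟨fun j' => if j' = j then 1 else 0, fun j' => by positivity, ?_⟩
    funext i
    simp [Finset.sum_apply, ite_apply, ite_smul, Finset.sum_ite_eq']
  have hsub : (↑(AddSubmonoid.closure (Set.range a)) : Set (F × (Fin d → ℤ))) ⊆ Kset := by
    intro u hu
    induction hu using AddSubmonoid.closure_induction with
    | mem x hx => obtain ⟨j, rfl⟩ := hx; exact hbase j
    | zero => exact hzero
    | add x y _ _ hx hy => exact hadd x hx y hy
  refine ⟨⟨hzero, hadd⟩, hsub, ?_⟩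
  set M : Fin d → ℤ := fun i => ∑ j, |(a j).2 i| with hM
  have hGfin : {u : F × (Fin d → ℤ) | u ∈ Kset ∧ ∀ i, |u.2 i| ≤ M i}.Finite := by
    apply Set.Finite.subset ((Set.finite_univ (α := F)).prod
      (Set.finite_Icc (fun i => -M i) M))
    rintro u ⟨-, hu⟩
    exact ⟨trivial, fun i => (abs_le.mp (hu i)).1, fun i => (abs_le.mp (hu i)).2⟩
  obtain ⟨m, f, hf⟩ := hGfin.fin_embedding
  have hmem : ∀ i, (f i : F × (Fin d → ℤ)) ∈
      {u : F × (Fin d → ℤ) | u ∈ Kset ∧ ∀ i, |u.2 i| ≤ M i} := by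
    intro i; rw [← hf]; exact Set.mem_range_self i
  refine ⟨m, fun i => f i, fun i => (hmem i).1, ?_⟩
  ext u
  constructor
  · rintro ⟨c, hc0, hc⟩
    set q : Fin n → ℕ := fun j => ⌊c j⌋.toNat with hq
    have hqz : ∀ j, ((q j : ℤ)) = ⌊c j⌋ := fun j =>
      Int.toNat_of_nonneg (Int.floor_nonneg.mpr (hc0 j))
    have hqc : ∀ j, ((q j : ℝ)) = ((⌊c j⌋ : ℤ) : ℝ) := by
      intro j
      rw [← hqz j]
      push_cast
      ring
    set s : F × (Fin d → ℤ) := ∑ j, q j • a j with hsdef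
    have hs : s ∈ AddSubmonoid.closure (Set.range a) :=
      AddSubmonoid.sum_mem _ fun j _ => AddSubmonoid.nsmul_mem _
        (AddSubmonoid.subset_closure (Set.mem_range_self j)) _
    set t : Fin n → ℝ := fun j => c j - (q j : ℝ) with ht
    have ht0 : ∀ j, 0 ≤ t j := by
      intro j
      have h := Int.floor_le (c j)
      simp only [ht, hqc j]
      linarith
    have ht1 : ∀ j, t j ≤ 1 := by
      intro j
      have h := Int.lt_floor_add_one (c j)
      simp only [ht, hqc j]
      linarith
    have hs2 : ∀ i, ((s.2 i : ℤ) : ℝ) = ∑ j, (q j : ℝ) * ((a j).2 i : ℝ) := by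
      intro i
      have h : s.2 i = ∑ j, (q j : ℤ) * (a j).2 i := by
        rw [hsdef, Prod.snd_sum, Finset.sum_apply]
        refine Finset.sum_congr rfl fun j _ => ?_
        simp [Pi.smul_apply, nsmul_eq_mul]
      rw [h]
      push_cast
      ring
    have hk2 : ∀ i, (((u - s).2 i : ℤ) : ℝ) = ∑ j, t j * ((a j).2 i : ℝ) := by
      intro i
      have hci := congrFun hc i
      simp only [Finset.sum_apply, Pi.smul_apply, smul_eq_mul] at hci
      have h3 : (u - s).2 i = u.2 i - s.2 i := rfl
      rw [h3]
      push_cast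
      rw [hci, hs2 i, ← Finset.sum_sub_distrib]
      exact Finset.sum_congr rfl fun j _ => by simp only [ht]; ring
    have hkK : u - s ∈ Kset := ⟨t, ht0, funext fun i => by
      simpa only [Finset.sum_apply, Pi.smul_apply, smul_eq_mul] using hk2 i⟩
    have hkB : ∀ i, |(u - s).2 i| ≤ M i := by
      intro i
      have hreal : |(((u - s).2 i : ℤ) : ℝ)| ≤ ((M i : ℤ) : ℝ) := by
        rw [hk2 i]
        calc |∑ j, t j * ((a j).2 i : ℝ)| ≤ ∑ j, |t j * ((a j).2 i : ℝ)| :=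
              Finset.abs_sum_le_sum_abs _ _
          _ ≤ ∑ j, |((a j).2 i : ℝ)| := by
              refine Finset.sum_le_sum fun j _ => ?_
              rw [abs_mul]
              exact mul_le_of_le_one_left (abs_nonneg _)
                (abs_le.mpr ⟨by linarith [ht0 j], ht1 j⟩)
          _ = ((M i : ℤ) : ℝ) := by rw [hM]; push_cast; ring
      exact_mod_cast hreal
    have hrange : u - s ∈ Set.range f := by rw [hf]; exact ⟨hkK, hkB⟩
    obtain ⟨i, hi⟩ := hrange
    refine Set.mem_iUnion.mpr ⟨i, s, hs, ?_⟩
    show s + (f i : F × (Fin d → ℤ)) = u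
    rw [hi]
    abel
  · intro hu
    obtain ⟨i, v, hv, rfl⟩ := Set.mem_iUnion.mp hu
    exact hadd v (hsub hv) (f i) (hmem i).1
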